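/- For all real s with 0 ≤ s ≤ 2π, one has 0 ≤ 2(1 − cos s)/s² ≤ e^{−s²/12}, where the expression 2(1 − cos s)/s² is assigned its limiting value 1 at s = 0. -/

import Mathlib

open Real

lemma nonneg_of_deriv (f : ℝ → ℝ) (hf : Differentiable ℝ f) (h0 : f 0 = 0)
    (hd : ∀ x : ℝ, 0 < x → 0 ≤ deriv f x) {x : ℝ} (hx : 0 ≤ x) : 0 ≤ f x := by
  have hmono := monotoneOn_of_deriv_nonneg (convex_Ici 0) hf.continuous.continuousOn
    hf.differentiableOn (fun y hy => hd y (by simpa [interior_Ici] using hy))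
  have := hmono (Set.self_mem_Ici) (Set.mem_Ici.2 hx) hx
  linarith [this, h0.ge]

lemma sin_ge_cubic {x : ℝ} (hx : 0 ≤ x) : x - x^3/6 ≤ Real.sin x := by
  have h := nonneg_of_deriv (fun x => Real.sin x - (x - x^3/6))
    (by fun_prop) (by simp) ?_ hx
  · simpa using h
  · intro y hy
    have hd : HasDerivAt (fun x : ℝ => Real.sin x - (x - x^3/6))
        (Real.cos y - (1 - 3*y^2/6)) y := by
      have h2 : HasDerivAt (fun x : ℝ => x - x^3/6) (1 - 3*y^2/6) y := by
        simpa using (hasDerivAt_id y).fun_sub ((hasDerivAt_pow 3 y).div_const 6)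
      exact (Real.hasDerivAt_sin y).sub h2
    rw [hd.deriv]
    nlinarith [Real.one_sub_sq_div_two_le_cos (x := y)]

lemma cos_le_quartic {x : ℝ} (hx : 0 ≤ x) : Real.cos x ≤ 1 - x^2/2 + x^4/24 := by
  have h := nonneg_of_deriv (fun x => 1 - x^2/2 + x^4/24 - Real.cos x)
    (by fun_prop) (by simp) ?_ hx
  · simpa using h
  · intro y hy
    have hd : HasDerivAt (fun x : ℝ => 1 - x^2/2 + x^4/24 - Real.cos x)
        (0 - 2*y^1/2 + 4*y^3/24 - (-Real.sin y)) y := by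
      exact (((hasDerivAt_const y (1:ℝ)).sub ((hasDerivAt_pow 2 y).div_const 2)).add
        ((hasDerivAt_pow 4 y).div_const 24)).sub (Real.hasDerivAt_cos y)
    rw [hd.deriv]
    nlinarith [sin_ge_cubic hy.le]

lemma sin_le_quintic {x : ℝ} (hx : 0 ≤ x) : Real.sin x ≤ x - x^3/6 + x^5/120 := by
  have h := nonneg_of_deriv (fun x => x - x^3/6 + x^5/120 - Real.sin x)
    (by fun_prop) (by simp) ?_ hx
  · simpa using h
  · intro y hy
    have hd : HasDerivAt (fun x : ℝ => x - x^3/6 + x^5/120 - Real.sin x)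
        (1 - 3*y^2/6 + 5*y^4/120 - Real.cos y) y := by
      exact (((hasDerivAt_id y).sub ((hasDerivAt_pow 3 y).div_const 6)).add
        ((hasDerivAt_pow 5 y).div_const 120)).sub (Real.hasDerivAt_sin y)
    rw [hd.deriv]
    nlinarith [cos_le_quartic hy.le]

lemma exp_neg_le_quadratic {u : ℝ} (hu : 0 ≤ u) : Real.exp (-u) ≤ 1 - u + u^2/2 := by
  have h := nonneg_of_deriv (fun u => 1 - u + u^2/2 - Real.exp (-u))
    (by fun_prop) (by simp) ?_ hu
  · simpa using h
  · intro y hy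
    have he : HasDerivAt (fun u : ℝ => Real.exp (-u)) (-Real.exp (-y)) y := by
      simpa using (hasDerivAt_neg y).exp
    have hd : HasDerivAt (fun u : ℝ => 1 - u + u^2/2 - Real.exp (-u))
        (0 - 1 + 2*y^1/2 - (-Real.exp (-y))) y := by
      exact (((hasDerivAt_const y (1:ℝ)).sub (hasDerivAt_id y)).add
        ((hasDerivAt_pow 2 y).div_const 2)).sub he
    rw [hd.deriv]
    nlinarith [Real.add_one_le_exp (-y)]

lemma exp_neg_ge_cubic {u : ℝ} (hu : 0 ≤ u) : 1 - u + u^2/2 - u^3/6 ≤ Real.exp (-u) := by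
  have h := nonneg_of_deriv (fun u => Real.exp (-u) - (1 - u + u^2/2 - u^3/6))
    (by fun_prop) (by simp) ?_ hu
  · simpa using h
  · intro y hy
    have he : HasDerivAt (fun u : ℝ => Real.exp (-u)) (-Real.exp (-y)) y := by
      simpa using (hasDerivAt_neg y).exp
    have hd : HasDerivAt (fun u : ℝ => Real.exp (-u) - (1 - u + u^2/2 - u^3/6))
        (-Real.exp (-y) - (0 - 1 + 2*y^1/2 - 3*y^2/6)) y := by
      exact he.sub ((((hasDerivAt_const y (1:ℝ)).sub (hasDerivAt_id y)).add
        ((hasDerivAt_pow 2 y).div_const 2)).sub ((hasDerivAt_pow 3 y).div_const 6))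
    rw [hd.deriv]
    nlinarith [exp_neg_le_quadratic hy.le]

lemma exp_645_le : Real.exp (0.645 : ℝ) ≤ 1.907 := by
  have h := Real.exp_bound' (x := 0.645) (by norm_num) (by norm_num) (n := 4) (by norm_num)
  refine h.trans ?_
  simp [Finset.sum_range_succ, Nat.factorial]
  norm_num

lemma exp_pi_sq_div_six : (0.19 : ℝ) ≤ Real.exp (-(Real.pi^2)/6) := by
  have hπ : Real.pi < 3.141593 := Real.pi_lt_d6
  have h1 : Real.pi^2/6 ≤ 1.645 := by nlinarith [Real.pi_pos]
  have h2 : Real.exp (Real.pi^2/6) ≤ Real.exp (1.645 : ℝ) := Real.exp_le_exp.2 h1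
  have h3 : Real.exp (1.645 : ℝ) = Real.exp 1 * Real.exp (0.645 : ℝ) := by
    rw [← Real.exp_add]; norm_num
  have h4 : Real.exp (1.645:ℝ) ≤ 2.7182818286 * 1.907 := by
    rw [h3]
    exact mul_le_mul Real.exp_one_lt_d9.le exp_645_le (Real.exp_pos _).le (by norm_num)
  have h5 : Real.exp (-(Real.pi^2)/6) = (Real.exp (Real.pi^2/6))⁻¹ := by
    rw [← Real.exp_neg]; ring_nf
  rw [h5]
  have : Real.exp (Real.pi^2/6) ≤ 5.184 := by linarith
  have hp := Real.exp_pos (Real.pi^2/6)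
  rw [le_inv_comm₀ (by norm_num) hp]
  calc (Real.exp (Real.pi^2/6)) ≤ 5.184 := this
    _ ≤ (0.19:ℝ)⁻¹ := by norm_num

lemma key {x : ℝ} (hx : 0 ≤ x) (hπ : x ≤ Real.pi) :
    Real.sin x ≤ x * Real.exp (-(x^2)/6) := by
  rcases le_or_gt (x^2) 7.2 with hc | hc
  · have h1 := sin_le_quintic hx
    have h2 := exp_neg_ge_cubic (u := x^2/6) (by positivity)
    have h3 : -(x^2/6) = -(x^2)/6 := by ring
    rw [h3] at h2
    have h4 : x * (1 - x^2/6 + (x^2/6)^2/2 - (x^2/6)^3/6) ≤ x * Real.exp (-(x^2)/6) :=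
      mul_le_mul_of_nonneg_left h2 hx
    nlinarith [pow_nonneg hx 5, pow_nonneg hx 7]
  · have hx' : (2.683 : ℝ) ≤ x := by nlinarith
    have hs : Real.sin x ≤ Real.pi - x := by
      rw [← Real.sin_pi_sub]
      exact Real.sin_le (by linarith)
    have hmono : Real.exp (-(Real.pi^2)/6) ≤ Real.exp (-(x^2)/6) := by
      apply Real.exp_le_exp.2
      have : x^2 ≤ Real.pi^2 := by nlinarith
      linarith
    have h19 := exp_pi_sq_div_six
    have hπ' : Real.pi < 3.141593 := Real.pi_lt_d6
    have : (0.19:ℝ) * x ≤ Real.exp (-(x^2)/6) * x := by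
      apply mul_le_mul_of_nonneg_right (by linarith) hx
    nlinarith

/-- For `0 ≤ s ≤ 2π`, `0 ≤ 2(1 − cos s)/s² ≤ e^{−s²/12}`, where `2(1 − cos s)/s²`
is assigned its limiting value `1` at `s = 0`. -/
theorem char_triangular_bound (s : ℝ) (h0 : 0 ≤ s) (h2 : s ≤ 2 * Real.pi) :
    0 ≤ (if s = 0 then (1 : ℝ) else 2 * (1 - Real.cos s) / s ^ 2) ∧
      (if s = 0 then (1 : ℝ) else 2 * (1 - Real.cos s) / s ^ 2) ≤
        Real.exp (-(s ^ 2) / 12) := by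
  rcases eq_or_lt_of_le h0 with rfl | hs
  · simp
  · rw [if_neg (by positivity)]
    constructor
    · apply div_nonneg _ (by positivity)
      nlinarith [Real.cos_le_one s]
    · set x := s / 2 with hxdef
      have hx0 : 0 ≤ x := by positivity
      have hxπ : x ≤ Real.pi := by
        rw [hxdef]; linarith
      have hk := key hx0 hxπ
      have hsin0 : 0 ≤ Real.sin x := Real.sin_nonneg_of_nonneg_of_le_pi hx0 hxπ
      have hsq : Real.sin x ^ 2 ≤ (x * Real.exp (-(x^2)/6)) ^ 2 := by
        apply pow_le_pow_left₀ hsin0 hk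
      have hhalf : Real.sin x ^ 2 = (1 - Real.cos s) / 2 := by
        have hs' : s = 2 * x := by rw [hxdef]; ring
        rw [hs', Real.cos_two_mul]
        have := Real.sin_sq_add_cos_sq x
        linarith
      have hxne : x ≠ 0 := by positivity
      have hexp2 : Real.exp (-(x^2)/6) ^ 2 = Real.exp (-(s^2)/12) := by
        rw [sq, ← Real.exp_add]
        congr 1
        rw [hxdef]; ring
      have hs2 : s ^ 2 = 4 * x ^ 2 := by rw [hxdef]; ring
      rw [div_le_iff₀ (by positivity)]
      calc 2 * (1 - Real.cos s) = 4 * Real.sin x ^ 2 := by rw [hhalf]; ring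
        _ ≤ 4 * (x * Real.exp (-(x^2)/6)) ^ 2 := by linarith
        _ = Real.exp (-(s^2)/12) * s ^ 2 := by
            rw [mul_pow, hexp2, hs2]; ring
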